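/- Let f: ℝⁿ → ℝ be continuously differentiable and let sequences {x^k}, {g^k}, {d^k}, {ε_k}, {r_k}, {ρ_k}, {t_k} follow the IRG scheme with backtracking stepsizes. Assume inf_k f(x^k) > −∞ and ρ_k → 0 as k → ∞. Then ε_k ↓ 0 and r_k ↓ 0 as k → ∞, and every accumulation point of {x^k} is a stationary point of f. -/

import Mathlib

open Filter

open scoped RealInnerProductSpace Topology

set_option maxHeartbeats 1000000



lemma irg_aux_decay (a : ℕ → ℝ) (θ : ℝ) (hθ0 : 0 < θ) (hθ1 : θ < 1)
    (hpos : ∀ k, 0 ≤ a k) (hmono : ∀ k, a (k + 1) ≤ a k)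
    (hinf : ∀ K : ℕ, ∃ k, K ≤ k ∧ a (k + 1) ≤ θ * a k) :
    Tendsto a atTop (nhds 0) := by
  have hanti : Antitone a := antitone_nat_of_succ_le hmono
  have key : ∀ m : ℕ, ∃ K, a K ≤ θ ^ m * a 0 := by
    intro m
    induction m with
    | zero => exact ⟨0, by simp⟩
    | succ m ih =>
      obtain ⟨K, hK⟩ := ih
      obtain ⟨k, hk, hdec⟩ := hinf K
      refine ⟨k + 1, ?_⟩
      calc a (k + 1) ≤ θ * a k := hdec
        _ ≤ θ * (θ ^ m * a 0) := by nlinarith [hanti hk, hK]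
        _ = θ ^ (m + 1) * a 0 := by ring
  rw [Metric.tendsto_atTop]
  intro e he
  have hgeo : Tendsto (fun m : ℕ => θ ^ m * a 0) atTop (nhds 0) := by
    simpa using (tendsto_pow_atTop_nhds_zero_of_lt_one hθ0.le hθ1).mul_const (a 0)
  obtain ⟨m, hm⟩ := (hgeo.eventually (gt_mem_nhds he)).exists
  obtain ⟨K, hK⟩ := key m
  refine ⟨K, fun n hn => ?_⟩
  rw [Real.dist_eq, sub_zero, abs_of_nonneg (hpos n)]
  exact lt_of_le_of_lt (le_trans (hanti hn) hK) hm


lemma irg_core {n : ℕ} (f : EuclideanSpace ℝ (Fin n) → ℝ) (hf : ContDiff ℝ 1 f)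
    (x d : ℕ → EuclideanSpace ℝ (Fin n)) (t : ℕ → ℝ) (β γ : ℝ)
    (hβ1 : β < 1) (hγ0 : 0 < γ)
    (hls : ∀ k, d k ≠ 0 → ∃ m : ℕ, t k = γ ^ m ∧
      f (x k + γ ^ m • d k) ≤ f (x k) - β * γ ^ m * ‖d k‖ ^ 2 ∧
      ∀ j < m, ¬ f (x k + γ ^ j • d k) ≤ f (x k) - β * γ ^ j * ‖d k‖ ^ 2)
    (ψ : ℕ → ℕ) (xbar : EuclideanSpace ℝ (Fin n)) (c : ℝ) (hc : 0 < c)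
    (hxlim : Tendsto (x ∘ ψ) atTop (nhds xbar))
    (hgrad : ∀ᶠ j in atTop, ⟪gradient f (x (ψ j)), d (ψ j)⟫ ≤ -‖d (ψ j)‖ ^ 2)
    (hdc : ∀ᶠ j in atTop, c ≤ ‖d (ψ j)‖)
    (htd : Tendsto (fun j => t (ψ j) * ‖d (ψ j)‖) atTop (nhds 0)) : False := by
  have hdiff : Differentiable ℝ f := hf.differentiable one_ne_zero
  have hgc : Continuous (gradient f) := by
    have h1 : Continuous (fderiv ℝ f) := hf.continuous_fderiv one_ne_zero
    exact (InnerProductSpace.toDual ℝ _).symm.continuous.comp h1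
  set a : ℝ := (1 - β) * c with ha_def
  have ha : 0 < a := mul_pos (by linarith) hc
  have hcont : ContinuousAt (gradient f) xbar := hgc.continuousAt
  rw [Metric.continuousAt_iff] at hcont
  obtain ⟨η, hη, hball⟩ := hcont (a / 2) (by linarith)
  -- eventual facts
  have h1 : ∀ᶠ j in atTop, dist (x (ψ j)) xbar < η / 2 := by
    have := Metric.tendsto_atTop.mp hxlim (η / 2) (by linarith)
    obtain ⟨N, hN⟩ := this
    exact eventually_atTop.mpr ⟨N, fun j hj => hN j hj⟩
  have hδ : (0:ℝ) < min (γ * (η / 2)) c := lt_min (by positivity) hc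
  have h2 : ∀ᶠ j in atTop, t (ψ j) * ‖d (ψ j)‖ < min (γ * (η / 2)) c :=
    htd.eventually (gt_mem_nhds hδ)
  obtain ⟨j, hgk, hDc, hX, hsm⟩ := (hgrad.and (hdc.and (h1.and h2))).exists
  set k := ψ j
  set X := x k with hXdef
  set D := d k with hDdef
  have hDpos : 0 < ‖D‖ := lt_of_lt_of_le hc hDc
  have hDne : D ≠ 0 := fun h => by rw [h, norm_zero] at hDpos; exact lt_irrefl 0 hDpos
  obtain ⟨m, htm, _, hfail⟩ := hls k hDne
  have hsm1 : t k * ‖D‖ < γ * (η / 2) := lt_of_lt_of_le hsm (min_le_left _ _)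
  have hsm2 : t k * ‖D‖ < c := lt_of_lt_of_le hsm (min_le_right _ _)
  have htpos : 0 < t k := htm ▸ pow_pos hγ0 m
  -- m ≥ 1
  obtain ⟨m', rfl⟩ : ∃ m', m = m' + 1 := by
    rcases Nat.eq_zero_or_pos m with h0 | h0
    · exfalso
      rw [h0, pow_zero] at htm
      rw [htm, one_mul] at hsm2
      exact absurd (lt_of_lt_of_le hsm2 hDc) (lt_irrefl _)
    · exact ⟨m - 1, by omega⟩
  set s : ℝ := γ ^ m' with hs_def
  have hspos : (0:ℝ) < s := pow_pos hγ0 m'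
  have hγs : γ * s = t k := by rw [htm]; ring
  have hfail' : f X - β * s * ‖D‖ ^ 2 < f (X + s • D) := by
    have := hfail m' (Nat.lt_succ_self m')
    exact lt_of_not_ge this
  -- derivative of the line restriction
  have hF' : ∀ u : ℝ, HasDerivAt (fun v : ℝ => f (X + v • D))
      ⟪gradient f (X + u • D), D⟫ u := by
    intro u
    have hline : HasDerivAt (fun v : ℝ => X + v • D) D u := by
      simpa using ((hasDerivAt_id u).smul_const D).const_add X
    have hg : HasGradientAt f (gradient f (X + u • D)) (X + u • D) :=
      (hdiff (X + u • D)).hasGradientAt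
    have hD2 := hg.hasFDerivAt.comp_hasDerivAt u hline
    have hD3 : HasDerivAt (fun v : ℝ => f (X + v • D)) ((InnerProductSpace.toDual ℝ (EuclideanSpace ℝ (Fin n)) (gradient f (X + u • D))) D) u := hD2
    simpa [Function.comp, InnerProductSpace.toDual_apply_apply] using hD3
  obtain ⟨ξ, hξ, hslope⟩ := exists_hasDerivAt_eq_slope (fun v : ℝ => f (X + v • D))
    (fun u => ⟪gradient f (X + u • D), D⟫) hspos
    (fun u _ => (hF' u).continuousAt.continuousWithinAt) (fun u _ => hF' u)
  have hF0 : f (X + (0:ℝ) • D) = f X := by simp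
  have hslope2 : -(β * ‖D‖ ^ 2) < ⟪gradient f (X + ξ • D), D⟫ := by
    rw [hslope, sub_zero, lt_div_iff₀ hspos, hF0]
    nlinarith [hfail']
  set y := X + ξ • D with hy_def
  -- distance estimates
  have hξs : 0 < ξ ∧ ξ < s := hξ
  have hyX : dist y X < η / 2 := by
    rw [hy_def, dist_eq_norm, add_sub_cancel_left, norm_smul,
      Real.norm_of_nonneg hξs.1.le]
    have h5 : ξ * ‖D‖ < s * ‖D‖ := mul_lt_mul_of_pos_right hξs.2 hDpos
    have h6 : γ * (s * ‖D‖) = t k * ‖D‖ := by rw [← hγs]; ring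
    have h7 : γ * (ξ * ‖D‖) < γ * (s * ‖D‖) := mul_lt_mul_of_pos_left h5 hγ0
    have h8 : γ * (ξ * ‖D‖) < γ * (η / 2) := by rw [h6] at h7; linarith [hsm1]
    exact lt_of_mul_lt_mul_left h8 hγ0.le
  have hyb : dist y xbar < η := by
    calc dist y xbar ≤ dist y X + dist X xbar := dist_triangle _ _ _
      _ < η / 2 + η / 2 := add_lt_add hyX hX
      _ = η := by ring
  have hXb : dist X xbar < η := lt_trans hX (by linarith)
  have hgy := hball hyb
  have hgX := hball hXb
  have hnorm : ‖gradient f y - gradient f X‖ < a := by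
    calc ‖gradient f y - gradient f X‖
        ≤ dist (gradient f y) (gradient f xbar) + dist (gradient f X) (gradient f xbar) := by
          rw [dist_eq_norm, dist_eq_norm]
          have := norm_sub_le (gradient f y - gradient f xbar) (gradient f X - gradient f xbar)
          simpa [sub_sub_sub_cancel_right] using this
      _ < a / 2 + a / 2 := add_lt_add hgy hgX
      _ = a := by ring
  -- inner product contradiction
  have hinner : a * ‖D‖ ≤ ⟪gradient f y - gradient f X, D⟫ := by
    rw [inner_sub_left]
    have h3 : (1 - β) * ‖D‖ ^ 2 ≤ ⟪gradient f y, D⟫ - ⟪gradient f X, D⟫ := by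
      linarith [hslope2, hgk]
    have h4 : a * ‖D‖ ≤ (1 - β) * ‖D‖ ^ 2 := by
      rw [ha_def]
      have h5 : (1 - β) * c ≤ (1 - β) * ‖D‖ := mul_le_mul_of_nonneg_left hDc (by linarith)
      nlinarith [hDpos.le, h5]
    linarith
  have hcs : ⟪gradient f y - gradient f X, D⟫ ≤ ‖gradient f y - gradient f X‖ * ‖D‖ :=
    real_inner_le_norm _ _
  have := mul_lt_mul_of_pos_right hnorm hDpos
  linarith


theorem stmt15' {n : ℕ} (f : EuclideanSpace ℝ (Fin n) → ℝ) (hf : ContDiff ℝ 1 f)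
    (x g d : ℕ → EuclideanSpace ℝ (Fin n)) (ε r ρ t : ℕ → ℝ) (μ θ β γ τ : ℝ)
    (hμ0 : 0 < μ) (hμ1 : μ < 1) (hθ0 : 0 < θ) (hθ1 : θ < 1)
    (hε : ∀ k, 0 < ε k) (hr : ∀ k, 0 < r k) (hρpos : ∀ k, 0 < ρ k) (ht : ∀ k, 0 < t k)
    (hgerr : ∀ k, ‖g k - gradient f (x k)‖ ≤ min (ε k) (ρ k))
    (hnull : ∀ k, ‖g k‖ ≤ r k + ε k →
      r (k + 1) = μ * r k ∧ ε (k + 1) = θ * ε k ∧ d k = 0)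
    (hserious : ∀ k, r k + ε k < ‖g k‖ →
      r (k + 1) = r k ∧ ε (k + 1) = ε k ∧
        d k = -(((‖g k‖ - ε k) / ‖g k‖) • g k))
    (hstep : ∀ k, x (k + 1) = x k + t k • d k)
    (hβ0 : 0 < β) (hβ1 : β < 1) (hγ0 : 0 < γ) (hγ1 : γ < 1)
    (hls : ∀ k, d k ≠ 0 → ∃ m : ℕ, t k = γ ^ m ∧
      f (x k + γ ^ m • d k) ≤ f (x k) - β * γ ^ m * ‖d k‖ ^ 2 ∧
      ∀ j < m, ¬ f (x k + γ ^ j • d k) ≤ f (x k) - β * γ ^ j * ‖d k‖ ^ 2)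
    (hinf : BddBelow (Set.range fun k => f (x k)))
    (hρ : Tendsto ρ atTop (nhds 0)) :
    Tendsto ε atTop (nhds 0) ∧ Tendsto r atTop (nhds 0) ∧
    ∀ xbar : EuclideanSpace ℝ (Fin n),
      (∃ φ : ℕ → ℕ, StrictMono φ ∧ Tendsto (x ∘ φ) atTop (nhds xbar)) →
      gradient f xbar = 0 := by
  -- monotonicity of ε and r
  have hεmono : ∀ k, ε (k + 1) ≤ ε k := by
    intro k
    rcases le_or_gt ‖g k‖ (r k + ε k) with h | h
    · rw [(hnull k h).2.1]; nlinarith [hε k]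
    · rw [(hserious k h).2.1]
  have hrmono : ∀ k, r (k + 1) ≤ r k := by
    intro k
    rcases le_or_gt ‖g k‖ (r k + ε k) with h | h
    · rw [(hnull k h).1]; nlinarith [hr k]
    · rw [(hserious k h).1]
  -- descent property
  have hdesc : ∀ k, f (x (k + 1)) ≤ f (x k) - β * (t k * ‖d k‖ ^ 2) := by
    intro k
    by_cases hd : d k = 0
    · rw [hstep k, hd]; simp
    · obtain ⟨m, htm, hle, -⟩ := hls k hd
      rw [hstep k, htm]
      calc f (x k + γ ^ m • d k) ≤ f (x k) - β * γ ^ m * ‖d k‖ ^ 2 := hle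
        _ = f (x k) - β * (γ ^ m * ‖d k‖ ^ 2) := by ring
  have hu_nonneg : ∀ k, 0 ≤ t k * ‖d k‖ ^ 2 := fun k =>
    mul_nonneg (ht k).le (sq_nonneg _)
  have hfmono : Antitone fun k => f (x k) := by
    apply antitone_nat_of_succ_le
    intro k
    nlinarith [hdesc k, hu_nonneg k, hβ0]
  have hflim := tendsto_atTop_ciInf hfmono hinf
  -- t_k ‖d_k‖² → 0
  have hdiff0 : Tendsto (fun k => f (x k) - f (x (k + 1))) atTop (nhds 0) := by
    have hshift : Tendsto (fun k => f (x (k + 1))) atTop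
        (nhds (⨅ k, f (x k))) := hflim.comp (tendsto_add_atTop_nat 1)
    simpa using hflim.sub hshift
  have htd2 : Tendsto (fun k => t k * ‖d k‖ ^ 2) atTop (nhds 0) := by
    have hb : Tendsto (fun k => β * (t k * ‖d k‖ ^ 2)) atTop (nhds 0) :=
      squeeze_zero (fun k => mul_nonneg hβ0.le (hu_nonneg k))
        (fun k => by linarith [hdesc k]) hdiff0
    have := hb.const_mul β⁻¹
    simp only [mul_zero] at this
    refine this.congr fun k => ?_
    field_simp
  -- summability of t_k ‖d_k‖²
  obtain ⟨B, hB⟩ := hinf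
  have hsum : Summable fun k => t k * ‖d k‖ ^ 2 := by
    have hsumβ : Summable fun k => β * (t k * ‖d k‖ ^ 2) := by
      apply summable_of_sum_range_le (c := f (x 0) - B)
        (fun k => mul_nonneg hβ0.le (hu_nonneg k))
      intro K
      have htel : ∑ i ∈ Finset.range K, (f (x i) - f (x (i + 1))) = f (x 0) - f (x K) :=
        Finset.sum_range_sub' (fun i => f (x i)) K
      have hBK : B ≤ f (x K) := hB (Set.mem_range_self K)
      calc ∑ i ∈ Finset.range K, β * (t i * ‖d i‖ ^ 2)
          ≤ ∑ i ∈ Finset.range K, (f (x i) - f (x (i + 1))) :=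
            Finset.sum_le_sum fun i _ => by linarith [hdesc i]
        _ = f (x 0) - f (x K) := htel
        _ ≤ f (x 0) - B := by linarith
    have := hsumβ.mul_left β⁻¹
    refine this.congr fun k => ?_
    field_simp
  -- key properties of serious steps
  have hkey : ∀ k, r k + ε k < ‖g k‖ →
      ‖d k‖ = ‖g k‖ - ε k ∧ ⟪gradient f (x k), d k⟫ ≤ -‖d k‖ ^ 2 := by
    intro k hk
    obtain ⟨-, -, hdk⟩ := hserious k hk
    have hgpos : 0 < ‖g k‖ := by nlinarith [hε k, hr k]
    have hnorm : ‖d k‖ = ‖g k‖ - ε k := by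
      rw [hdk, norm_neg, norm_smul, Real.norm_of_nonneg
        (div_nonneg (by nlinarith [hr k]) hgpos.le)]
      field_simp
    refine ⟨hnorm, ?_⟩
    have hinner : ⟪g k, d k⟫ = -((‖g k‖ - ε k) * ‖g k‖) := by
      rw [hdk, inner_neg_right, real_inner_smul_right, real_inner_self_eq_norm_sq]
      field_simp
    have herr : ‖g k - gradient f (x k)‖ ≤ ε k := (hgerr k).trans (min_le_left _ _)
    have hsplit : ⟪gradient f (x k), d k⟫ = ⟪g k, d k⟫ - ⟪g k - gradient f (x k), d k⟫ := by
      rw [inner_sub_left]; ring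
    have hcs : |⟪g k - gradient f (x k), d k⟫| ≤ ‖g k - gradient f (x k)‖ * ‖d k‖ :=
      abs_real_inner_le_norm _ _
    have hcs2 : -(ε k * ‖d k‖) ≤ ⟪g k - gradient f (x k), d k⟫ := by
      have h1 : ‖g k - gradient f (x k)‖ * ‖d k‖ ≤ ε k * ‖d k‖ :=
        mul_le_mul_of_nonneg_right herr (norm_nonneg _)
      have h2 := abs_le.mp hcs
      linarith [h2.1]
    rw [hsplit, hinner, hnorm]
    nlinarith [hε k, hr k]
  -- infinitely many null steps
  have hinfnull : ∀ K : ℕ, ∃ k, K ≤ k ∧ ‖g k‖ ≤ r k + ε k := by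
    intro K
    by_contra hcon
    push_neg at hcon
    have hser : ∀ k, K ≤ k → r k + ε k < ‖g k‖ := hcon
    have hrconst : ∀ j : ℕ, r (K + j) = r K := by
      intro j
      induction j with
      | zero => rfl
      | succ j ih =>
        rw [← ih]
        exact (hserious (K + j) (hser (K + j) (by omega))).1
    have hrconst' : ∀ k, K ≤ k → r k = r K := by
      intro k hk
      have := hrconst (k - K)
      rwa [show K + (k - K) = k by omega] at this
    have hdlb : ∀ k, K ≤ k → r K ≤ ‖d k‖ := by
      intro k hk
      have h1 := (hkey k (hser k hk)).1
      have h2 := hser k hk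
      rw [h1, ← hrconst' k hk]
      linarith
    -- Cauchy sequence
    have hdistle : ∀ j : ℕ, dist (x (j + K)) (x ((j + K) + 1)) ≤
        (r K)⁻¹ * (t (j + K) * ‖d (j + K)‖ ^ 2) := by
      intro j
      have hk : K ≤ j + K := by omega
      have hrK : 0 < r K := hr K
      have hlb := hdlb (j + K) hk
      rw [dist_comm, dist_eq_norm, hstep (j + K), add_sub_cancel_left, norm_smul,
        Real.norm_of_nonneg (ht (j + K)).le]
      rw [inv_mul_eq_div, le_div_iff₀ hrK]
      nlinarith [mul_nonneg (ht (j + K)).le (norm_nonneg (d (j + K))), hlb]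
    have hsum2 : Summable fun k => dist (x k) (x (k + 1)) := by
      rw [← summable_nat_add_iff K]
      refine Summable.of_nonneg_of_le (fun j => dist_nonneg) hdistle ?_
      exact ((summable_nat_add_iff K).mpr hsum).mul_left (r K)⁻¹
    have hCauchy : CauchySeq x := cauchySeq_of_summable_dist hsum2
    obtain ⟨xbar, hxbar⟩ := cauchySeq_tendsto_of_complete hCauchy
    refine irg_core f hf x d t β γ hβ1 hγ0 hls (fun j => j + K) xbar (r K) (hr K)
      (hxbar.comp (tendsto_add_atTop_nat K)) ?_ ?_ ?_
    · exact Eventually.of_forall fun j => (hkey (j + K) (hser (j + K) (by omega))).2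
    · exact Eventually.of_forall fun j => hdlb (j + K) (by omega)
    · have hshift : Tendsto (fun j => t (j + K) * ‖d (j + K)‖ ^ 2) atTop (nhds 0) :=
        htd2.comp (tendsto_add_atTop_nat K)
      have hmul := hshift.const_mul (r K)⁻¹
      simp only [mul_zero] at hmul
      refine squeeze_zero (fun j => mul_nonneg (ht _).le (norm_nonneg _))
        (fun j => ?_) hmul
      have hrK : 0 < r K := hr K
      have hlb := hdlb (j + K) (by omega)
      rw [inv_mul_eq_div, le_div_iff₀ hrK]
      nlinarith [mul_nonneg (ht (j + K)).le (norm_nonneg (d (j + K))), hlb]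
  -- ε → 0 and r → 0
  have hεlim : Tendsto ε atTop (nhds 0) := by
    refine irg_aux_decay ε θ hθ0 hθ1 (fun k => (hε k).le) hεmono fun K => ?_
    obtain ⟨k, hk, hn⟩ := hinfnull K
    exact ⟨k, hk, le_of_eq (hnull k hn).2.1⟩
  have hrlim : Tendsto r atTop (nhds 0) := by
    refine irg_aux_decay r μ hμ0 hμ1 (fun k => (hr k).le) hrmono fun K => ?_
    obtain ⟨k, hk, hn⟩ := hinfnull K
    exact ⟨k, hk, le_of_eq (hnull k hn).1⟩
  refine ⟨hεlim, hrlim, ?_⟩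
  -- accumulation points are stationary
  rintro xbar ⟨φ, hφ, hxφ⟩
  by_contra hne
  have hφtop : Tendsto φ atTop atTop := hφ.tendsto_atTop
  have hgc : Continuous (gradient f) := by
    have h1 : Continuous (fderiv ℝ f) := hf.continuous_fderiv one_ne_zero
    exact (InnerProductSpace.toDual ℝ _).symm.continuous.comp h1
  have haG : 0 < ‖gradient f xbar‖ := norm_pos_iff.mpr hne
  have hgradφ : Tendsto (fun j => gradient f (x (φ j))) atTop (nhds (gradient f xbar)) :=
    (hgc.tendsto xbar).comp hxφ
  have hρφ : Tendsto (fun j => ρ (φ j)) atTop (nhds 0) := hρ.comp hφtop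
  have hεφ : Tendsto (fun j => ε (φ j)) atTop (nhds 0) := hεlim.comp hφtop
  have hrφ : Tendsto (fun j => r (φ j)) atTop (nhds 0) := hrlim.comp hφtop
  have hgφ : Tendsto (fun j => g (φ j)) atTop (nhds (gradient f xbar)) := by
    have h1 : Tendsto (fun j => g (φ j) - gradient f (x (φ j))) atTop (nhds 0) :=
      squeeze_zero_norm (fun j => (hgerr (φ j)).trans (min_le_right _ _)) hρφ
    have := h1.add hgradφ
    simpa using this
  have hgnorm : Tendsto (fun j => ‖g (φ j)‖) atTop (nhds ‖gradient f xbar‖) := hgφ.norm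
  have hserφ : ∀ᶠ j in atTop, r (φ j) + ε (φ j) < ‖g (φ j)‖ := by
    have hsum0 : Tendsto (fun j => r (φ j) + ε (φ j)) atTop (nhds 0) := by
      simpa using hrφ.add hεφ
    exact hsum0.eventually_lt hgnorm haG
  have hdlim : Tendsto (fun j => ‖d (φ j)‖) atTop (nhds ‖gradient f xbar‖) := by
    have heq : (fun j => ‖g (φ j)‖ - ε (φ j)) =ᶠ[atTop] fun j => ‖d (φ j)‖ :=
      hserφ.mono fun j h => ((hkey _ h).1).symm
    have h2 : Tendsto (fun j => ‖g (φ j)‖ - ε (φ j)) atTop (nhds ‖gradient f xbar‖) := by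
      simpa using hgnorm.sub hεφ
    exact h2.congr' heq
  have hdc : ∀ᶠ j in atTop, ‖gradient f xbar‖ / 2 ≤ ‖d (φ j)‖ :=
    (hdlim.eventually (lt_mem_nhds (half_lt_self haG))).mono fun j h => h.le
  have htdφ : Tendsto (fun j => t (φ j) * ‖d (φ j)‖) atTop (nhds 0) := by
    have hshift : Tendsto (fun j => t (φ j) * ‖d (φ j)‖ ^ 2) atTop (nhds 0) :=
      htd2.comp hφtop
    have hmul := hshift.const_mul (2 / ‖gradient f xbar‖)
    simp only [mul_zero] at hmul
    refine squeeze_zero' (Eventually.of_forall fun j => mul_nonneg (ht _).le (norm_nonneg _))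
      (hdc.mono fun j hj => ?_) hmul
    rw [div_mul_eq_mul_div, le_div_iff₀ haG]
    nlinarith [mul_nonneg (ht (φ j)).le (norm_nonneg (d (φ j))), hj]
  exact irg_core f hf x d t β γ hβ1 hγ0 hls φ xbar (‖gradient f xbar‖ / 2)
    (half_pos haG) hxφ (hserφ.mono fun j h => (hkey _ h).2) hdc htdφ



/-- The general IRG scheme (Algorithm 1): inexact gradients `g^k` with automatically
controlled errors `ε_k` (and manual errors `ρ_k`), radius updates with factors
`μ, θ ∈ (0,1)`, reduced directions `d^k`, and iterations `x^{k+1} = x^k + t_k d^k`. -/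
def IRGScheme {n : ℕ} (f : EuclideanSpace ℝ (Fin n) → ℝ)
    (x g d : ℕ → EuclideanSpace ℝ (Fin n)) (ε r ρ t : ℕ → ℝ) (μ θ : ℝ) : Prop :=
  (0 < μ ∧ μ < 1) ∧ (0 < θ ∧ θ < 1) ∧
  (∀ k, 0 < ε k) ∧ (∀ k, 0 < r k) ∧ (∀ k, 0 < ρ k) ∧ (∀ k, 0 < t k) ∧
  (∀ k, ‖g k - gradient f (x k)‖ ≤ min (ε k) (ρ k)) ∧
  (∀ k, ‖g k‖ ≤ r k + ε k →
    r (k + 1) = μ * r k ∧ ε (k + 1) = θ * ε k ∧ d k = 0) ∧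
  (∀ k, r k + ε k < ‖g k‖ →
    r (k + 1) = r k ∧ ε (k + 1) = ε k ∧
      d k = -(((‖g k‖ - ε k) / ‖g k‖) • g k)) ∧
  (∀ k, x (k + 1) = x k + t k • d k)

/-- Backtracking stepsize selection: `t_k = τ` on null iterations, and otherwise
`t_k = γ^{m_k}` with `m_k` the smallest nonnegative integer satisfying the linesearch
condition `f(x^k + γ^m d^k) ≤ f(x^k) - β γ^m ‖d^k‖²`. -/
def BacktrackingStepsize {n : ℕ} (f : EuclideanSpace ℝ (Fin n) → ℝ)
    (x d : ℕ → EuclideanSpace ℝ (Fin n)) (t : ℕ → ℝ) (β γ τ : ℝ) : Prop :=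
  (0 < β ∧ β < 1) ∧ (0 < γ ∧ γ < 1) ∧ (0 < τ ∧ τ < 1) ∧
  (∀ k, d k = 0 → t k = τ) ∧
  (∀ k, d k ≠ 0 → ∃ m : ℕ,
    t k = γ ^ m ∧
    f (x k + γ ^ m • d k) ≤ f (x k) - β * γ ^ m * ‖d k‖ ^ 2 ∧
    ∀ j < m, ¬ f (x k + γ ^ j • d k) ≤ f (x k) - β * γ ^ j * ‖d k‖ ^ 2)

/-- Theorem 5.2: for the IRG method with backtracking stepsizes, if `inf f(x^k) > -∞`
and `ρ_k → 0`, then `ε_k ↓ 0`, `r_k ↓ 0`, and every accumulation point of `{x^k}` is a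
stationary point of `f`. -/
theorem stmt15 {n : ℕ} (f : EuclideanSpace ℝ (Fin n) → ℝ) (hf : ContDiff ℝ 1 f)
    (x g d : ℕ → EuclideanSpace ℝ (Fin n)) (ε r ρ t : ℕ → ℝ) (μ θ β γ τ : ℝ)
    (hirg : IRGScheme f x g d ε r ρ t μ θ)
    (hbt : BacktrackingStepsize f x d t β γ τ)
    (hinf : BddBelow (Set.range fun k => f (x k)))
    (hρ : Tendsto ρ atTop (nhds 0)) :
    Tendsto ε atTop (nhds 0) ∧ Tendsto r atTop (nhds 0) ∧
    ∀ xbar : EuclideanSpace ℝ (Fin n),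
      (∃ φ : ℕ → ℕ, StrictMono φ ∧ Tendsto (x ∘ φ) atTop (nhds xbar)) →
      gradient f xbar = 0 := by
  obtain ⟨⟨hμ0, hμ1⟩, ⟨hθ0, hθ1⟩, hε, hr, hρpos, ht, hgerr, hnull, hserious, hstep⟩ := hirg
  obtain ⟨⟨hβ0, hβ1⟩, ⟨hγ0, hγ1⟩, ⟨hτ0, hτ1⟩, htnull, hls⟩ := hbt
  exact stmt15' f hf x g d ε r ρ t μ θ β γ τ hμ0 hμ1 hθ0 hθ1 hε hr hρpos ht hgerr
    hnull hserious hstep hβ0 hβ1 hγ0 hγ1 hls hinf hρ
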